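/- The tropical complex hyperfield TC is algebraically closed: every univariate polynomial over TC of degree at least 1 has a root in TC. -/

import Mathlib

open Set
open scoped Classical

/-- The axioms of a (Krasner) hyperfield on a carrier `H`, for a multivalued
addition `add`, multiplication `mul`, additive inverse `neg`, and constants. -/
structure IsHyperfield {H : Type*} (add : H → H → Set H) (mul : H → H → H)
    (neg : H → H) (zero one : H) : Prop where
  add_nonempty : ∀ x y, (add x y).Nonempty
  hadd_comm : ∀ x y, add x y = add y x
  hadd_assoc : ∀ x y z, (⋃ w ∈ add x y, add w z) = ⋃ w ∈ add y z, add x w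
  zero_hadd : ∀ x, add zero x = {x}
  hneg_add : ∀ x, zero ∈ add x (neg x)
  hneg_unique : ∀ x y, zero ∈ add x y → y = neg x
  reversible : ∀ x y z, x ∈ add y z → z ∈ add x (neg y)
  hmul_comm : ∀ x y, mul x y = mul y x
  hmul_assoc : ∀ x y z, mul (mul x y) z = mul x (mul y z)
  one_hmul : ∀ x, mul one x = x
  zero_hmul : ∀ x, mul zero x = zero
  hdistrib : ∀ a x y, (mul a) '' (add x y) = add (mul a x) (mul a y)
  zero_ne_one : zero ≠ one
  exists_inv : ∀ x, x ≠ zero → ∃ y, mul x y = one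

/-- Multivalued hypersum of a list of elements. -/
def hsum {H : Type*} (add : H → H → Set H) (zero : H) : List H → Set H
  | [] => {zero}
  | a :: l => ⋃ b ∈ hsum add zero l, add a b

/-- Powers with respect to a monoid multiplication. -/
def hpow {H : Type*} (mul : H → H → H) (one : H) (a : H) : ℕ → H
  | 0 => one
  | n + 1 => mul a (hpow mul one a n)

/-- Multivalued evaluation of the univariate polynomial `⊞_{i=0}^n c_i ⊙ X^i` at `a`. -/
def evalPoly {H : Type*} (add : H → H → Set H) (mul : H → H → H) (zero one : H)
    (n : ℕ) (c : ℕ → H) (a : H) : Set H :=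
  hsum add zero ((List.range (n + 1)).map fun i => mul (c i) (hpow mul one a i))

/-- Multivalued evaluation of a multivariate polynomial given by a list of
terms (coefficient, exponent vector) at a point `x`. -/
def evalMPoly {H : Type*} (add : H → H → Set H) (mul : H → H → H) (zero one : H)
    {n : ℕ} (terms : List (H × (Fin n → ℕ))) (x : Fin n → H) : Set H :=
  hsum add zero (terms.map fun t =>
    mul t.1 ((List.ofFn fun j => hpow mul one (x j) (t.2 j)).foldr mul one))

/-- Hyperfield homomorphism axioms. -/
structure IsHyperfieldHom {H1 H2 : Type*}
    (add1 : H1 → H1 → Set H1) (mul1 : H1 → H1 → H1) (zero1 one1 : H1)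
    (add2 : H2 → H2 → Set H2) (mul2 : H2 → H2 → H2) (zero2 one2 : H2)
    (f : H1 → H2) : Prop where
  map_zero : f zero1 = zero2
  map_one : f one1 = one2
  map_mul : ∀ x y, f (mul1 x y) = mul2 (f x) (f y)
  map_add : ∀ x y, f '' (add1 x y) ⊆ add2 (f x) (f y)

/-- `f` is relatively algebraically closed: every root of the coefficientwise
push-forward of a univariate polynomial lifts through `f` to a root. -/
def IsRAC {H1 H2 : Type*}
    (add1 : H1 → H1 → Set H1) (mul1 : H1 → H1 → H1) (zero1 one1 : H1)
    (add2 : H2 → H2 → Set H2) (mul2 : H2 → H2 → H2) (zero2 one2 : H2)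
    (f : H1 → H2) : Prop :=
  ∀ (n : ℕ) (c : ℕ → H1) (b : H2),
    zero2 ∈ evalPoly add2 mul2 zero2 one2 n (fun i => f (c i)) b →
    ∃ a : H1, f a = b ∧ zero1 ∈ evalPoly add1 mul1 zero1 one1 n c a

/-- Tropical hyperaddition on `ℝ ∪ {-∞}`. -/
noncomputable def Tadd (x y : WithBot ℝ) : Set (WithBot ℝ) :=
  if x = y then {z | z ≤ x} else {max x y}

/-- Tropical multiplication: addition of extended reals. -/
noncomputable def Tmul (x y : WithBot ℝ) : WithBot ℝ := x + y

/-- Hyperaddition of the tropical complex hyperfield `TC` on `ℂ`. -/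
noncomputable def TCadd (z w : ℂ) : Set ℂ :=
  if w = -z then {c | ‖c‖ ≤ ‖z‖}
  else if ‖w‖ < ‖z‖ then {z}
  else if ‖z‖ < ‖w‖ then {w}
  else {c | ∃ t : ℝ, 0 ≤ t ∧ t ≤ 1 ∧
    c = ((‖z‖ / ‖(t : ℂ) * z + (1 - (t : ℂ)) * w‖ : ℝ) : ℂ) *
      ((t : ℂ) * z + (1 - (t : ℂ)) * w)}

/-- The homomorphism `η(z) = log |z|` from `TC` to the tropical hyperfield. -/
noncomputable def eta (z : ℂ) : WithBot ℝ :=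
  if z = 0 then ⊥ else ((Real.log ‖z‖ : ℝ) : WithBot ℝ)

/-- Hyperaddition of the hyperfield of signs. -/
noncomputable def Sadd (x y : SignType) : Set SignType :=
  if x = 0 then {y} else if y = 0 then {x} else if x = y then {x} else Set.univ

/-- Hyperaddition of the Krasner hyperfield on `Bool` (`false = 0`, `true = 1`). -/
def Kadd (x y : Bool) : Set Bool :=
  if x = false then {y} else if y = false then {x} else Set.univ

/-- `c ∈ (X ⊞ -a) ⊙ d` : the coefficients `c` arise from multiplying the linear
factor `X ⊞ (-a)` with the polynomial with coefficients `d`. -/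
def LinFactor {H : Type*} (add : H → H → Set H) (mul : H → H → H) (zero : H)
    (neg : H → H) (a : H) (c d : ℕ → H) : Prop :=
  ∀ i, c i ∈ add (if i = 0 then zero else d (i - 1)) (mul (neg a) (d i))

/-- `MultGe … a n c k` : the multiplicity of `a` as a root of the degree-`n`
polynomial with coefficients `c` is at least `k` (recursive peeling of linear factors). -/
def MultGe {H : Type*} (add : H → H → Set H) (mul : H → H → H) (zero one : H)
    (neg : H → H) (a : H) : ℕ → (ℕ → H) → ℕ → Prop
  | _, _, 0 => True
  | n, c, k + 1 => zero ∈ evalPoly add mul zero one n c a ∧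
      ∃ d : ℕ → H, (∀ i, n ≤ i → d i = zero) ∧ LinFactor add mul zero neg a c d ∧
        MultGe add mul zero one neg a (n - 1) d k

/-- The multiplicity of `a` as a root. -/
noncomputable def hmult {H : Type*} (add : H → H → Set H) (mul : H → H → H)
    (zero one : H) (neg : H → H) (n : ℕ) (c : ℕ → H) (a : H) : ℕ :=
  sSup {k | MultGe add mul zero one neg a n c k}

/-- The multiplicity bound: the sum of root multiplicities is at most the degree. -/
def MultBound {H : Type*} (add : H → H → Set H) (mul : H → H → H)
    (zero one : H) (neg : H → H) : Prop :=
  ∀ (n : ℕ) (c : ℕ → H), c n ≠ zero →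
    ∀ S : Finset H, (S.sum fun a => hmult add mul zero one neg n c a) ≤ n

/-- The multiplicity equality: the sum of root multiplicities equals the degree. -/
def MultEq {H : Type*} (add : H → H → Set H) (mul : H → H → H)
    (zero one : H) (neg : H → H) : Prop :=
  MultBound add mul zero one neg ∧
    ∀ (n : ℕ) (c : ℕ → H), c n ≠ zero →
      ∃ S : Finset H, (S.sum fun a => hmult add mul zero one neg n c a) = n

/-- Iterated splitting off of a list of linear factors: `c ∈ (X ⊞ -a₁) ⊙ ⋯ ⊙ (X ⊞ -aₘ) ⊙ d`. -/
def MultiLinFactor {H : Type*} (add : H → H → Set H) (mul : H → H → H) (zero : H)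
    (neg : H → H) : List H → (ℕ → H) → (ℕ → H) → Prop
  | [], c, d => c = d
  | a :: l, c, d => ∃ e : ℕ → H, LinFactor add mul zero neg a c e ∧
      MultiLinFactor add mul zero neg l e d

/-- The inheritance property: any sub-multiset of the multiset of roots (with
multiplicity) of size at most the degree can be split off as linear factors. -/
def Inheritance {H : Type*} (add : H → H → Set H) (mul : H → H → H)
    (zero one : H) (neg : H → H) : Prop :=
  ∀ (n : ℕ) (c : ℕ → H), c n ≠ zero →
    ∀ l : List H, l.length ≤ n →
      (∀ a : H, (l.filter fun x => x = a).length ≤ hmult add mul zero one neg n c a) →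
      ∃ q : ℕ → H, MultiLinFactor add mul zero neg l c q


section Aux

open Complex

lemma hpow_eq (a : ℂ) (k : ℕ) : hpow (· * ·) (1 : ℂ) a k = a ^ k := by
  induction k with
  | zero => rfl
  | succ k ih => show a * hpow (· * ·) (1:ℂ) a k = _ ; rw [ih, pow_succ, mul_comm]

lemma TCadd_abs_le {z w x : ℂ} (hx : x ∈ TCadd z w) :
    ‖x‖ ≤ max (‖z‖) (‖w‖) := by
  unfold TCadd at hx
  split_ifs at hx with h1 h2 h3
  · exact le_trans hx (le_max_left _ _)
  · rw [Set.mem_singleton_iff] at hx; subst hx; exact le_max_left _ _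
  · rw [Set.mem_singleton_iff] at hx; subst hx; exact le_max_right _ _
  · obtain ⟨t, _, _, rfl⟩ := hx
    set u := (t : ℂ) * z + (1 - (t : ℂ)) * w with hu
    rcases eq_or_ne u 0 with h | h
    · simp [h]
    · rw [norm_mul, Complex.norm_real, Real.norm_eq_abs,
        _root_.abs_of_nonneg (div_nonneg (norm_nonneg z) (norm_nonneg u)),
        div_mul_cancel₀ _ (norm_ne_zero_iff.mpr h)]
      exact le_max_left _ _

lemma TCadd_nonempty (z w : ℂ) : (TCadd z w).Nonempty := by
  unfold TCadd
  split_ifs with h1 h2 h3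
  · exact ⟨0, by simp⟩
  · exact ⟨z, rfl⟩
  · exact ⟨w, rfl⟩
  · exact ⟨_, ⟨0, le_refl 0, zero_le_one, rfl⟩⟩

lemma self_mem_TCadd {z w : ℂ} (h : ‖w‖ ≤ ‖z‖) : z ∈ TCadd z w := by
  have hz : z ≠ 0 ∨ w = -z := by
    rcases eq_or_ne z 0 with hz0 | hz0
    · right
      subst hz0
      simpa using le_antisymm (by simpa using h) (norm_nonneg w)
    · exact Or.inl hz0
  unfold TCadd
  split_ifs with h1 h2 h3
  · exact le_refl (‖z‖)
  · rfl
  · exact absurd h (not_le.mpr h3)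
  · -- |w| = |z|, w ≠ -z ; use t = 1
    have hzz : z ≠ 0 := hz.resolve_right h1
    refine ⟨1, zero_le_one, le_refl 1, ?_⟩
    have : ((1:ℝ) : ℂ) * z + (1 - ((1:ℝ):ℂ)) * w = z := by push_cast; ring
    rw [this, div_self (by simpa using hzz)]
    simp

lemma mem_TCadd_right {z w : ℂ} (h : ‖w‖ ≤ ‖z‖) : z ∈ TCadd w z := by
  unfold TCadd
  split_ifs with h1 h2 h3
  · subst h1; simp
  · exact absurd h2 (not_lt.mpr h)
  · rfl
  · -- |z| = |w|, z ≠ -w ; use t = 0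
    have hzz : z ≠ 0 := by
      rintro rfl
      have hw0 : ‖w‖ = 0 := le_antisymm (by simpa using h) (norm_nonneg w)
      have hw : w = 0 := by simpa using hw0
      exact h1 (by simp [hw])
    refine ⟨0, le_refl 0, zero_le_one, ?_⟩
    have he : ((0:ℝ) : ℂ) * w + (1 - ((0:ℝ):ℂ)) * z = z := by push_cast; ring
    rw [he]
    have habs : ‖w‖ = ‖z‖ := le_antisymm (not_lt.mp h2) (not_lt.mp h3)
    rw [habs, div_self (by simpa using hzz)]
    simp

lemma hsum_exists_bdd (M : ℝ) (hM : 0 ≤ M) (l : List ℂ)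
    (hl : ∀ x ∈ l, ‖x‖ ≤ M) :
    ∃ b ∈ hsum TCadd 0 l, ‖b‖ ≤ M := by
  induction l with
  | nil => exact ⟨0, rfl, by simpa⟩
  | cons t l ih =>
    obtain ⟨b, hb, hbM⟩ := ih (fun x hx => hl x (List.mem_cons_of_mem _ hx))
    obtain ⟨x, hx⟩ := TCadd_nonempty t b
    refine ⟨x, Set.mem_biUnion hb hx, ?_⟩
    exact (TCadd_abs_le hx).trans (max_le (hl t (List.mem_cons_self)) hbM)

lemma mem_hsum_of_max {z : ℂ} (l : List ℂ) (hz : z ∈ l)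
    (hl : ∀ x ∈ l, ‖x‖ ≤ ‖z‖) : z ∈ hsum TCadd 0 l := by
  induction l with
  | nil => cases hz
  | cons t l ih =>
    rcases List.mem_cons.mp hz with h | h
    · subst h
      obtain ⟨b, hb, hbM⟩ := hsum_exists_bdd (‖z‖) (norm_nonneg z) l
        (fun x hx => hl x (List.mem_cons_of_mem _ hx))
      exact Set.mem_biUnion hb (self_mem_TCadd hbM)
    · exact Set.mem_biUnion (ih h (fun x hx => hl x (List.mem_cons_of_mem _ hx)))
        (mem_TCadd_right (hl t (List.mem_cons_self)))

end Aux

/-- The tropical complex hyperfield `TC` is algebraically closed: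
every univariate polynomial of degree at least 1 has a root. -/
theorem TC_algClosed (n : ℕ) (hn : 1 ≤ n) (c : ℕ → ℂ) (hc : c n ≠ 0) :
    ∃ a : ℂ, (0 : ℂ) ∈ evalPoly TCadd (· * ·) 0 1 n c a := by
  by_cases h0 : c 0 = 0
  · -- take a = 0 : every term vanishes
    refine ⟨0, ?_⟩
    unfold evalPoly
    apply mem_hsum_of_max
    · exact List.mem_map.mpr ⟨0, List.mem_range.mpr (Nat.succ_pos n), by simp [hpow_eq, h0]⟩
    · intro x hx
      obtain ⟨i, hi, rfl⟩ := List.mem_map.mp hx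
      rcases Nat.eq_zero_or_pos i with rfl | hip
      · simp [hpow_eq, h0]
      · simp [hpow_eq, zero_pow (Nat.pos_iff_ne_zero.mp hip)]
  · have hA0 : 0 < ‖c 0‖ := norm_pos_iff.mpr h0
    have hK : (Finset.Icc 1 n).Nonempty := ⟨1, Finset.mem_Icc.mpr ⟨le_refl 1, hn⟩⟩
    set g : ℝ → ℝ := fun r => (Finset.Icc 1 n).sup' hK
      (fun k => ‖c k‖ * r ^ k) with hg
    have hgc : Continuous g := by
      rw [continuous_iff_continuousAt]
      intro x
      exact ContinuousAt.finset_sup'_apply hK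
        (fun i _ => (continuous_const.mul (continuous_pow i)).continuousAt)
    have hg0 : g 0 = 0 := by
      apply le_antisymm
      · apply Finset.sup'_le
        intro k hk
        have hk1 : 1 ≤ k := (Finset.mem_Icc.mp hk).1
        simp [zero_pow (by omega : k ≠ 0)]
      · have h1 : (1 : ℕ) ∈ Finset.Icc 1 n := Finset.mem_Icc.mpr ⟨le_refl 1, hn⟩
        have h2 := Finset.le_sup' (fun k => ‖c k‖ * (0:ℝ) ^ k) h1
        simp only [pow_one, mul_zero] at h2
        exact h2
    set R : ℝ := max 1 (‖c 0‖ / ‖c n‖) with hRdef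
    have hR1 : (1:ℝ) ≤ R := le_max_left _ _
    have hcn : 0 < ‖c n‖ := norm_pos_iff.mpr hc
    have hgR : ‖c 0‖ ≤ g R := by
      have h2 : ‖c 0‖ / ‖c n‖ ≤ R := le_max_right _ _
      have h3 : ‖c 0‖ ≤ ‖c n‖ * R := by
        rw [← div_le_iff₀' hcn]
        exact h2
      have h4 : R ≤ R ^ n := le_self_pow₀ hR1 (by omega)
      have h5 : ‖c n‖ * R ≤ ‖c n‖ * R ^ n :=
        mul_le_mul_of_nonneg_left h4 hcn.le
      have h6 : (n : ℕ) ∈ Finset.Icc 1 n := Finset.mem_Icc.mpr ⟨hn, le_refl n⟩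
      have h7 := Finset.le_sup' (fun k => ‖c k‖ * R ^ k) h6
      exact h3.trans (h5.trans h7)
    obtain ⟨r, hrIcc, hgr⟩ := intermediate_value_Icc
      (le_trans zero_le_one hR1) hgc.continuousOn ⟨by rw [hg0]; exact hA0.le, hgR⟩
    have hr0 : 0 < r := by
      rcases lt_or_eq_of_le hrIcc.1 with h | h
      · exact h
      · exfalso
        rw [← h, hg0] at hgr
        exact hA0.ne hgr
    obtain ⟨j, hjK, hj⟩ := Finset.exists_mem_eq_sup' hK
      (fun k => ‖c k‖ * r ^ k)
    have hjval : ‖c j‖ * r ^ j = ‖c 0‖ := by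
      rw [← hj]; exact hgr
    obtain ⟨hj1, hjn⟩ := Finset.mem_Icc.mp hjK
    have hcj : c j ≠ 0 := by
      intro hzero
      rw [hzero] at hjval
      simp at hjval
      exact hA0.ne' hjval.symm
    obtain ⟨a, ha⟩ := IsAlgClosed.exists_pow_nat_eq (-c 0 / c j) (show 0 < j by omega)
    have haj : c j * a ^ j = -c 0 := by rw [ha]; field_simp
    have har : ‖a‖ = r := by
      have h1 : ‖c j‖ * (‖a‖) ^ j = ‖c 0‖ := by
        rw [← norm_pow, ← norm_mul, haj, norm_neg]
      have h2 : (‖a‖) ^ j = r ^ j := by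
        apply mul_left_cancel₀ (norm_ne_zero_iff.mpr hcj)
        rw [h1, hjval]
      exact (pow_left_strictMonoOn₀ (by omega : j ≠ 0)).injOn
        (norm_nonneg a) hr0.le h2
    refine ⟨a, ?_⟩
    unfold evalPoly
    rw [List.range_succ_eq_map, List.map_cons, List.map_map]
    have htail : (-c 0) ∈ hsum TCadd 0 ((List.range n).map
        ((fun i => c i * hpow (· * ·) (1:ℂ) a i) ∘ Nat.succ)) := by
      apply mem_hsum_of_max
      · refine List.mem_map.mpr ⟨j - 1, List.mem_range.mpr (by omega), ?_⟩
        have hjs : Nat.succ (j - 1) = j := by omega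
        simp only [Function.comp_apply, hjs, hpow_eq]
        exact haj
      · intro x hx
        obtain ⟨i, hi, rfl⟩ := List.mem_map.mp hx
        simp only [Function.comp_apply, hpow_eq]
        rw [norm_neg, norm_mul, norm_pow, har]
        have hmem : Nat.succ i ∈ Finset.Icc 1 n :=
          Finset.mem_Icc.mpr ⟨by omega, by have := List.mem_range.mp hi; omega⟩
        have := Finset.le_sup' (fun k => ‖c k‖ * r ^ k) hmem
        calc ‖c (Nat.succ i)‖ * r ^ (Nat.succ i) ≤ g r := this
          _ = ‖c 0‖ := hgr
    refine Set.mem_biUnion htail ?_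
    show (0:ℂ) ∈ TCadd (c 0 * hpow (· * ·) (1:ℂ) a 0) (-c 0)
    have hhead : c 0 * hpow (· * ·) (1:ℂ) a 0 = c 0 := by simp [hpow]
    rw [hhead]
    unfold TCadd
    rw [if_pos rfl]
    simp
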